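/- Let $d_k=\Big(\frac{k}{2e}\Big)^{k/2}\frac{2\sqrt\pi}{\Gamma\big(\frac{k+1}{2}\big)}$ for integers $k\ge 1$. Then the sequence $(d_k)_{k\ge1}$ is strictly decreasing, i.e. $d_k>d_{k+1}$ for every $k\ge 1$, and $d_k>\sqrt2$ for every $k\ge 1$; in particular $d_1=\sqrt{2\pi/e}\approx 1.520$. -/

import Mathlib

/-- The entropy (Gaussian density) of the shrinking sphere self-shrinker `𝕊ᵏ`:
`d_k = (k/(2e))^{k/2} · 2√π / Γ((k+1)/2)`. -/
noncomputable def entropyD (k : ℕ) : ℝ :=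
  ((k : ℝ) / (2 * Real.exp 1)) ^ ((k : ℝ) / 2)
    * (2 * Real.sqrt Real.pi / Real.Gamma (((k : ℝ) + 1) / 2))

open Real Filter Topology

namespace Stmt18

noncomputable def c (k : ℕ) : ℝ :=
  ((k : ℝ) + 2) ^ (k + 2) / (Real.exp 1 ^ 2 * (k : ℝ) ^ k * ((k : ℝ) + 1) ^ 2)

lemma G_pos (k : ℕ) : 0 < Real.Gamma (((k : ℝ) + 1) / 2) :=
  Real.Gamma_pos_of_pos (by positivity)

lemma entropyD_pos {k : ℕ} (hk : 1 ≤ k) : 0 < entropyD k := by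
  have hk' : (0:ℝ) < k := by exact_mod_cast hk
  have h1 : (0:ℝ) < (k : ℝ) / (2 * Real.exp 1) := by positivity
  have := G_pos k
  unfold entropyD
  positivity

lemma sq_entropyD (k : ℕ) :
    (entropyD k) ^ 2
      = ((k : ℝ) / (2 * Real.exp 1)) ^ k *
        (4 * π / (Real.Gamma (((k : ℝ) + 1) / 2)) ^ 2) := by
  have hb : (0:ℝ) ≤ (k : ℝ) / (2 * Real.exp 1) := by positivity
  unfold entropyD
  rw [mul_pow, div_pow, mul_pow, Real.sq_sqrt Real.pi_pos.le]
  rw [← Real.rpow_natCast (((k : ℝ) / (2 * Real.exp 1)) ^ ((k : ℝ) / 2)) 2,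
      ← Real.rpow_mul hb]
  norm_num

lemma G_rec (k : ℕ) :
    Real.Gamma ((((k + 2 : ℕ) : ℝ) + 1) / 2)
      = (((k : ℝ) + 1) / 2) * Real.Gamma (((k : ℝ) + 1) / 2) := by
  have h : (((k + 2 : ℕ) : ℝ) + 1) / 2 = ((k : ℝ) + 1) / 2 + 1 := by push_cast; ring
  rw [h, Real.Gamma_add_one (by positivity)]

lemma c_pos {k : ℕ} (hk : 1 ≤ k) : 0 < c k := by
  have hk' : (0:ℝ) < k := by exact_mod_cast hk
  unfold c; positivity

lemma step {k : ℕ} (hk : 1 ≤ k) :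
    (entropyD (k + 2)) ^ 2 = c k * (entropyD k) ^ 2 := by
  have hk' : (0:ℝ) < k := by exact_mod_cast hk
  have hG := G_pos k
  have he : (0:ℝ) < Real.exp 1 := Real.exp_pos 1
  rw [sq_entropyD, sq_entropyD, G_rec]
  unfold c
  have hcast : ((k + 2 : ℕ) : ℝ) = (k : ℝ) + 2 := by push_cast; ring
  rw [hcast]
  field_simp
  rw [div_pow, div_pow, mul_pow, mul_pow]
  field_simp
  ring


noncomputable def f (x : ℝ) : ℝ :=
  (x + 2) * Real.log (x + 2) - x * Real.log x - 2 * Real.log (x + 1) - 2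

lemma aux_log {s : ℝ} (hs : 0 < s) : 2 * s / (2 + s) < Real.log (1 + s) := by
  set g : ℝ → ℝ := fun t => Real.log (1 + t) - 2 * t / (2 + t) with hg
  have hmono : StrictMonoOn g (Set.Ici 0) := by
    apply strictMonoOn_of_deriv_pos (convex_Ici 0)
    · apply ContinuousOn.sub
      · apply ContinuousOn.log (by fun_prop)
        intro x hx
        simp only [Set.mem_Ici] at hx; positivity
      · apply ContinuousOn.div (by fun_prop) (by fun_prop)
        intro x hx
        simp only [Set.mem_Ici] at hx; positivity
    · intro x hx
      rw [interior_Ici, Set.mem_Ioi] at hx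
      have h1 : HasDerivAt (fun t : ℝ => Real.log (1 + t)) (1 / (1 + x)) x := by
        have := ((hasDerivAt_id x).const_add 1).log (by positivity)
        simpa using this
      have h2 : HasDerivAt (fun t : ℝ => 2 * t / (2 + t))
          ((2 * 1 * (2 + x) - 2 * x * 1) / (2 + x) ^ 2) x := by
        exact (((hasDerivAt_id x).const_mul 2).div ((hasDerivAt_id x).const_add 2)
          (by positivity)).congr_deriv rfl
      have hD : HasDerivAt g (1 / (1 + x) - (2 * 1 * (2 + x) - 2 * x * 1) / (2 + x) ^ 2) x :=
        h1.sub h2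
      rw [hD.deriv]
      rw [sub_pos, div_lt_div_iff₀ (by positivity) (by positivity)]
      nlinarith
  have h0 : g 0 < g s := hmono (by simp) (by simp [hs.le]) hs
  have : g 0 = 0 := by simp [hg]
  rw [this] at h0
  simpa [hg, sub_pos] using h0

lemma two_div_lt {x : ℝ} (hx : 1 ≤ x) :
    2 / (x + 1) < Real.log (x + 2) - Real.log x := by
  have hx0 : (0:ℝ) < x := lt_of_lt_of_le one_pos hx
  have h := aux_log (s := 2 / x) (by positivity)
  have e1 : (1 : ℝ) + 2 / x = (x + 2) / x := by field_simp
  have e2 : 2 * (2 / x) / (2 + 2 / x) = 2 / (x + 1) := by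
    rw [div_eq_div_iff (by positivity) (by positivity)]
    field_simp
  rw [e1, e2, Real.log_div (by positivity) (by positivity)] at h
  exact h

lemma f_mono : StrictMonoOn f (Set.Ici 1) := by
  apply strictMonoOn_of_deriv_pos (convex_Ici 1)
  · unfold f
    apply ContinuousOn.sub
    apply ContinuousOn.sub
    apply ContinuousOn.sub
    · apply ContinuousOn.mul (by fun_prop)
      apply ContinuousOn.log (by fun_prop)
      intro x hx; simp only [Set.mem_Ici] at hx; positivity
    · apply ContinuousOn.mul (by fun_prop)
      apply ContinuousOn.log (by fun_prop)
      intro x hx; simp only [Set.mem_Ici] at hx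
      have : (0:ℝ) < x := lt_of_lt_of_le one_pos hx
      positivity
    · apply ContinuousOn.mul (by fun_prop)
      apply ContinuousOn.log (by fun_prop)
      intro x hx; simp only [Set.mem_Ici] at hx; positivity
    · fun_prop
  · intro x hx
    rw [interior_Ici, Set.mem_Ioi] at hx
    have hx0 : (0:ℝ) < x := lt_trans one_pos hx
    have hA : HasDerivAt (fun y : ℝ => (y + 2) * Real.log (y + 2))
        (1 * Real.log (x + 2) + (x + 2) * (1 / (x + 2))) x := by
      apply HasDerivAt.mul ((hasDerivAt_id x).add_const 2)
      have := ((hasDerivAt_id x).add_const 2).log (by positivity)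
      simpa using this
    have hB : HasDerivAt (fun y : ℝ => y * Real.log y)
        (1 * Real.log x + x * (1 / x)) x := by
      apply HasDerivAt.mul (hasDerivAt_id x)
      have := (hasDerivAt_id x).log (ne_of_gt hx0)
      simpa using this
    have hC : HasDerivAt (fun y : ℝ => 2 * Real.log (y + 1)) (2 * (1 / (x + 1))) x := by
      apply HasDerivAt.const_mul
      have := ((hasDerivAt_id x).add_const 1).log (by positivity)
      simpa using this
    have hD : HasDerivAt f
        (1 * Real.log (x + 2) + (x + 2) * (1 / (x + 2)) -
          (1 * Real.log x + x * (1 / x)) - 2 * (1 / (x + 1))) x := by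
      exact ((hA.sub hB).sub hC).sub_const 2
    rw [hD.deriv]
    have h1 : (x + 2) * (1 / (x + 2)) = 1 := by field_simp
    have h2 : x * (1 / x) = 1 := by field_simp
    have h3 := two_div_lt (le_of_lt hx)
    rw [h1, h2]
    have : 2 * (1 / (x + 1)) = 2 / (x + 1) := by ring
    rw [this]
    linarith

lemma f_tendsto : Tendsto f atTop (𝓝 0) := by
  have h1 : Tendsto (fun x : ℝ => x * Real.log (1 + 2 / x)) atTop (𝓝 2) :=
    Real.tendsto_mul_log_one_add_div_atTop 2
  have hq : Tendsto (fun x : ℝ => (x + 2) / (x + 1)) atTop (𝓝 1) := by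
    have : Tendsto (fun x : ℝ => 1 + (x + 1)⁻¹) atTop (𝓝 (1 + 0)) := by
      apply Tendsto.const_add
      apply Tendsto.comp tendsto_inv_atTop_zero
      exact tendsto_atTop_add_const_right _ 1 tendsto_id
    rw [add_zero] at this
    apply this.congr'
    filter_upwards [eventually_ge_atTop (0:ℝ)] with x hx
    have : x + 1 ≠ 0 := by positivity
    field_simp
    ring
  have h2 : Tendsto (fun x : ℝ => Real.log ((x + 2) / (x + 1))) atTop (𝓝 0) := by
    have := (Real.continuousAt_log (by norm_num : (1:ℝ) ≠ 0)).tendsto.comp hq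
    simpa [Function.comp_def] using this
  have h3 : Tendsto (fun x : ℝ =>
      x * Real.log (1 + 2 / x) + 2 * Real.log ((x + 2) / (x + 1)) - 2) atTop
      (𝓝 (2 + 2 * 0 - 2)) := (h1.add (h2.const_mul 2)).sub_const 2
  norm_num at h3
  apply h3.congr'
  filter_upwards [eventually_ge_atTop (1:ℝ)] with x hx
  have hx0 : (0:ℝ) < x := lt_of_lt_of_le one_pos hx
  have e1 : (1 : ℝ) + 2 / x = (x + 2) / x := by field_simp
  rw [e1, Real.log_div (by positivity) (by positivity),
    Real.log_div (by positivity) (by positivity)]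
  unfold f
  ring

lemma f_neg {x : ℝ} (hx : 1 ≤ x) : f x < 0 := by
  have h1 : f x < f (x + 1) :=
    f_mono (Set.mem_Ici.2 hx) (Set.mem_Ici.2 (by linarith)) (lt_add_one x)
  have h2 : f (x + 1) ≤ 0 := by
    apply ge_of_tendsto f_tendsto
    filter_upwards [eventually_ge_atTop (x + 1)] with y hy
    rcases eq_or_lt_of_le hy with h | h
    · rw [h]
    · exact le_of_lt (f_mono (Set.mem_Ici.2 (by linarith)) (Set.mem_Ici.2 (by linarith)) h)
  linarith

lemma log_c {k : ℕ} (hk : 1 ≤ k) : Real.log (c k) = f (k : ℝ) := by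
  have hk' : (0:ℝ) < k := by exact_mod_cast hk
  unfold c f
  rw [Real.log_div (by positivity) (by positivity), Real.log_mul (by positivity) (by positivity),
    Real.log_mul (by positivity) (by positivity), Real.log_pow, Real.log_pow, Real.log_pow,
    Real.log_pow, Real.log_exp]
  push_cast
  ring

lemma c_lt_one {k : ℕ} (hk : 1 ≤ k) : c k < 1 := by
  have h := f_neg (x := (k : ℝ)) (by exact_mod_cast hk)
  rw [← log_c hk] at h
  exact (Real.log_neg_iff (c_pos hk)).mp h

lemma c_mono {k : ℕ} (hk : 1 ≤ k) : c k < c (k + 1) := by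
  have hk1 : (1:ℝ) ≤ (k : ℝ) := by exact_mod_cast hk
  have h1 : f (k : ℝ) < f ((k : ℝ) + 1) :=
    f_mono (Set.mem_Ici.2 hk1) (Set.mem_Ici.2 (by linarith)) (lt_add_one _)
  rw [← Real.exp_log (c_pos hk), ← Real.exp_log (c_pos (by omega : 1 ≤ k + 1))]
  apply Real.exp_lt_exp.mpr
  rw [log_c hk, log_c (by omega : 1 ≤ k + 1)]
  push_cast
  exact h1

open Stirling

lemma sq_stirling {n : ℕ} (hn : 1 ≤ n) :
    (stirlingSeq n) ^ 2 = ((n.factorial : ℝ)) ^ 2 / ((2 * n) * ((n : ℝ) / Real.exp 1) ^ (2 * n)) := by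
  have hn' : (0:ℝ) < n := by exact_mod_cast hn
  unfold stirlingSeq
  rw [div_pow, mul_pow, Real.sq_sqrt (by positivity : (0:ℝ) ≤ 2 * (n:ℝ)), ← pow_mul,
    mul_comm n 2]

lemma gamma_half (m : ℕ) :
    Real.Gamma ((m : ℝ) + 1/2)
      = ((2 * m).factorial : ℝ) * Real.sqrt π / (4 ^ m * (m.factorial : ℝ)) := by
  induction m with
  | zero =>
    rw [show ((0:ℕ):ℝ) + 1/2 = 1/2 by norm_num, Real.Gamma_one_half_eq]
    simp
  | succ m ih =>
    have h1 : ((m + 1 : ℕ) : ℝ) + 1/2 = ((m : ℝ) + 1/2) + 1 := by push_cast; ring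
    rw [h1, Real.Gamma_add_one (by positivity), ih]
    have h2 : 2 * (m + 1) = (2 * m + 1) + 1 := by ring
    rw [h2, Nat.factorial_succ, Nat.factorial_succ, Nat.factorial_succ]
    have hf : ((m.factorial : ℝ)) ≠ 0 := Nat.cast_ne_zero.mpr (Nat.factorial_ne_zero m)
    push_cast
    field_simp
    ring

lemma even_sq {m : ℕ} (hm : 1 ≤ m) :
    (entropyD (2 * m)) ^ 2 = 2 * (stirlingSeq m / stirlingSeq (2 * m)) ^ 2 := by
  have hm' : (0:ℝ) < m := by exact_mod_cast hm
  have he : (0:ℝ) < Real.exp 1 := Real.exp_pos 1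
  have harg : (((2 * m : ℕ) : ℝ) + 1) / 2 = (m : ℝ) + 1/2 := by push_cast; ring
  rw [sq_entropyD, harg, gamma_half,
    show (stirlingSeq m / stirlingSeq (2 * m)) ^ 2
        = (stirlingSeq m) ^ 2 / (stirlingSeq (2 * m)) ^ 2 from div_pow _ _ _,
    sq_stirling hm, sq_stirling (by omega : 1 ≤ 2 * m)]
  have hcast : ((2 * m : ℕ) : ℝ) = 2 * (m : ℝ) := by push_cast; ring
  rw [hcast]
  have hsq : ((((2*m).factorial:ℝ)) * Real.sqrt π / (4 ^ m * (m.factorial:ℝ))) ^ 2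
      = (((2*m).factorial:ℝ))^2 * π / ((4 ^ m * (m.factorial:ℝ))^2) := by
    rw [div_pow, mul_pow, Real.sq_sqrt Real.pi_pos.le]
  rw [hsq]
  have hf1 : ((m.factorial : ℝ)) ≠ 0 := Nat.cast_ne_zero.mpr (Nat.factorial_ne_zero m)
  have hf2 : (((2 * m).factorial : ℝ)) ≠ 0 := Nat.cast_ne_zero.mpr (Nat.factorial_ne_zero _)
  have hpi : π ≠ 0 := Real.pi_ne_zero
  have h4 : ((4:ℝ)) ^ m ≠ 0 := by positivity
  have hexp1 : Real.exp ((m:ℝ) * 4) = Real.exp ((m:ℝ) * 2) * Real.exp 1 ^ (m * 2) := by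
    rw [← Real.exp_nat_mul, ← Real.exp_add]; congr 1; push_cast; ring
  have h4pow : ((4:ℝ)) ^ (m * 2) = 2 ^ (m * 4) := by
    rw [show ((4:ℝ)) = 2 ^ 2 by norm_num, ← pow_mul]; congr 1; ring
  field_simp
  ring_nf
  rw [h4pow]

lemma tendsto_two_mul : Tendsto (fun m : ℕ => 2 * m) atTop atTop :=
  Filter.tendsto_atTop_atTop.mpr fun b => ⟨b, fun a ha => by omega⟩

lemma even_sq_tendsto :
    Tendsto (fun m : ℕ => 2 * (stirlingSeq m / stirlingSeq (2 * m)) ^ 2) atTop (𝓝 2) := by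
  have h2m : Tendsto (fun m : ℕ => stirlingSeq (2 * m)) atTop (𝓝 (Real.sqrt π)) :=
    tendsto_stirlingSeq_sqrt_pi.comp tendsto_two_mul
  have hne : Real.sqrt π ≠ 0 := by positivity
  have hratio : Tendsto (fun m : ℕ => stirlingSeq m / stirlingSeq (2 * m)) atTop (𝓝 1) := by
    have := tendsto_stirlingSeq_sqrt_pi.div h2m hne
    simpa [div_self hne, Pi.div_def] using this
  have := (hratio.pow 2).const_mul (2:ℝ)
  simpa using this

lemma even_tendsto : Tendsto (fun m : ℕ => entropyD (2 * m)) atTop (𝓝 (Real.sqrt 2)) := by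
  have h := (Real.continuous_sqrt.tendsto 2).comp even_sq_tendsto
  apply h.congr'
  filter_upwards [eventually_ge_atTop 1] with m hm
  have hpos := entropyD_pos (k := 2 * m) (by omega)
  simp only [Function.comp_apply, ← even_sq hm]
  exact Real.sqrt_sq hpos.le

lemma odd_sq {m : ℕ} (hm : 1 ≤ m) :
    (entropyD (2 * m + 1)) ^ 2
      = π * ((1 : ℝ) + 1 / (2 * (m : ℝ))) ^ (2 * m) * (2 + 1 / (m : ℝ))
        / (Real.exp 1 * (stirlingSeq m) ^ 2) := by
  have hm' : (0:ℝ) < m := by exact_mod_cast hm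
  have he : (0:ℝ) < Real.exp 1 := Real.exp_pos 1
  have harg : (((2 * m + 1 : ℕ) : ℝ) + 1) / 2 = ((m : ℕ) : ℝ) + 1 := by push_cast; ring
  rw [sq_entropyD, harg, Real.Gamma_nat_eq_factorial, sq_stirling hm]
  have hcast : ((2 * m + 1 : ℕ) : ℝ) = 2 * (m : ℝ) + 1 := by push_cast; ring
  rw [hcast]
  have h1 : (1 : ℝ) + 1 / (2 * (m : ℝ)) = (2 * (m : ℝ) + 1) / (2 * (m : ℝ)) := by
    field_simp
  rw [h1, div_pow, div_pow]
  have hf1 : ((m.factorial : ℝ)) ≠ 0 := Nat.cast_ne_zero.mpr (Nat.factorial_ne_zero m)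
  have hexp : Real.exp (2 * (m:ℝ)) = Real.exp 1 ^ (2 * m) := by
    rw [← Real.exp_nat_mul]; congr 1; push_cast; ring
  field_simp
  rw [div_pow]
  field_simp
  ring

lemma odd_sq_tendsto :
    Tendsto (fun m : ℕ => π * ((1 : ℝ) + 1 / (2 * (m : ℝ))) ^ (2 * m) * (2 + 1 / (m : ℝ))
        / (Real.exp 1 * (stirlingSeq m) ^ 2)) atTop (𝓝 2) := by
  have hpow : Tendsto (fun m : ℕ => ((1 : ℝ) + 1 / (2 * (m : ℝ))) ^ (2 * m)) atTop
      (𝓝 (Real.exp 1)) := by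
    have := (Real.tendsto_one_add_div_pow_exp 1).comp tendsto_two_mul
    apply this.congr
    intro m
    simp only [Function.comp_apply]
    push_cast
    ring_nf
  have hm : Tendsto (fun m : ℕ => (2 : ℝ) + 1 / (m : ℝ)) atTop (𝓝 2) := by
    have := tendsto_one_div_atTop_nhds_zero_nat.const_add (2:ℝ)
    simpa using this
  have hs2 : Tendsto (fun m : ℕ => (stirlingSeq m) ^ 2) atTop (𝓝 π) := by
    have := tendsto_stirlingSeq_sqrt_pi.pow 2
    simpa [Real.sq_sqrt Real.pi_pos.le] using this
  have hnum : Tendsto (fun m : ℕ => π * ((1 : ℝ) + 1 / (2 * (m : ℝ))) ^ (2 * m)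
      * (2 + 1 / (m : ℝ))) atTop (𝓝 (π * Real.exp 1 * 2)) :=
    (hpow.const_mul π).mul hm
  have hden : Tendsto (fun m : ℕ => Real.exp 1 * (stirlingSeq m) ^ 2) atTop
      (𝓝 (Real.exp 1 * π)) := hs2.const_mul _
  have hdenne : Real.exp 1 * π ≠ 0 := by positivity
  have := hnum.div hden hdenne
  have heq : π * Real.exp 1 * 2 / (Real.exp 1 * π) = 2 := by
    rw [div_eq_iff hdenne]; ring
  rwa [heq] at this

lemma odd_tendsto : Tendsto (fun m : ℕ => entropyD (2 * m + 1)) atTop (𝓝 (Real.sqrt 2)) := by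
  have h := (Real.continuous_sqrt.tendsto 2).comp odd_sq_tendsto
  apply h.congr'
  filter_upwards [eventually_ge_atTop 1] with m hm
  have hpos := entropyD_pos (k := 2 * m + 1) (by omega)
  simp only [Function.comp_apply, ← odd_sq hm]
  exact Real.sqrt_sq hpos.le

lemma tendsto_par (K : ℕ) :
    Tendsto (fun j : ℕ => entropyD (K + 2 * j)) atTop (𝓝 (Real.sqrt 2)) := by
  rcases Nat.even_or_odd K with ⟨a, ha⟩ | ⟨a, ha⟩
  · have hcomp : Tendsto (fun j : ℕ => a + j) atTop atTop :=
      tendsto_atTop_atTop.mpr fun b => ⟨b, fun j hj => by omega⟩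
    have h := even_tendsto.comp hcomp
    apply h.congr
    intro j
    simp only [Function.comp_apply]
    congr 1
    omega
  · have hcomp : Tendsto (fun j : ℕ => a + j) atTop atTop :=
      tendsto_atTop_atTop.mpr fun b => ⟨b, fun j hj => by omega⟩
    have h := odd_tendsto.comp hcomp
    apply h.congr
    intro j
    simp only [Function.comp_apply]
    congr 1
    omega

lemma step_lt {k : ℕ} (hk : 1 ≤ k) : entropyD (k + 2) < entropyD k := by
  have h := step hk
  have hc := c_lt_one hk
  have hpos := entropyD_pos hk
  have hsq : (entropyD (k + 2)) ^ 2 < (entropyD k) ^ 2 := by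
    rw [h]
    calc c k * entropyD k ^ 2 < 1 * entropyD k ^ 2 :=
          mul_lt_mul_of_pos_right hc (pow_pos hpos 2)
      _ = entropyD k ^ 2 := one_mul _
  exact lt_of_pow_lt_pow_left₀ 2 hpos.le hsq

lemma le_on_par {k : ℕ} (hk : 1 ≤ k) : ∀ j : ℕ, entropyD (k + 2 * j) ≤ entropyD k := by
  intro j
  induction j with
  | zero => simp
  | succ j ih =>
    rw [show k + 2 * (j + 1) = (k + 2 * j) + 2 from by ring]
    exact le_trans (step_lt (k := k + 2 * j) (by omega)).le ih

lemma sqrt2_le {k : ℕ} (hk : 1 ≤ k) : Real.sqrt 2 ≤ entropyD k :=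
  le_of_tendsto (tendsto_par k) (Filter.Eventually.of_forall (le_on_par hk))

lemma sqrt2_lt {k : ℕ} (hk : 1 ≤ k) : Real.sqrt 2 < entropyD k :=
  lt_of_le_of_lt (sqrt2_le (k := k + 2) (by omega)) (step_lt hk)

lemma mono {K : ℕ} (hK : 1 ≤ K) : entropyD (K + 1) < entropyD K := by
  by_contra hcon
  push_neg at hcon
  have key : ∀ j : ℕ,
      c (K + 1) * (entropyD (K + 2 + 2 * j)) ^ 2 ≤ c K * (entropyD (K + 3 + 2 * j)) ^ 2 := by
    intro j
    induction j with
    | zero =>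
      have h1 : (entropyD (K + 2)) ^ 2 = c K * (entropyD K) ^ 2 := step hK
      have h2 : (entropyD (K + 3)) ^ 2 = c (K + 1) * (entropyD (K + 1)) ^ 2 := by
        rw [show K + 3 = (K + 1) + 2 from by ring]
        exact step (by omega)
      have hd : (entropyD K) ^ 2 ≤ (entropyD (K + 1)) ^ 2 :=
        pow_le_pow_left₀ (entropyD_pos hK).le hcon 2
      have hc1 := c_pos hK
      have hc2 := c_pos (k := K + 1) (by omega)
      simp only [mul_zero, add_zero]
      rw [h1, h2]
      calc c (K + 1) * (c K * entropyD K ^ 2)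
          = (c K * c (K + 1)) * entropyD K ^ 2 := by ring
        _ ≤ (c K * c (K + 1)) * entropyD (K + 1) ^ 2 :=
            mul_le_mul_of_nonneg_left hd (mul_pos hc1 hc2).le
        _ = c K * (c (K + 1) * entropyD (K + 1) ^ 2) := by ring
    | succ j ih =>
      have e1 : K + 2 + 2 * (j + 1) = (K + 2 + 2 * j) + 2 := by ring
      have e2 : K + 3 + 2 * (j + 1) = (K + 3 + 2 * j) + 2 := by ring
      rw [e1, e2, step (k := K + 2 + 2 * j) (by omega), step (k := K + 3 + 2 * j) (by omega)]
      have hcm : c (K + 2 + 2 * j) ≤ c (K + 3 + 2 * j) := by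
        rw [show K + 3 + 2 * j = (K + 2 + 2 * j) + 1 from by ring]
        exact (c_mono (k := K + 2 + 2 * j) (by omega)).le
      have hc1 := c_pos (k := K + 2 + 2 * j) (by omega)
      have hc2 := c_pos (k := K + 3 + 2 * j) (by omega)
      have hc3 := c_pos hK
      have hc4 := c_pos (k := K + 1) (by omega)
      have hsq2 : (0:ℝ) ≤ (entropyD (K + 3 + 2 * j)) ^ 2 := sq_nonneg _
      calc c (K + 1) * (c (K + 2 + 2 * j) * entropyD (K + 2 + 2 * j) ^ 2)
          = c (K + 2 + 2 * j) * (c (K + 1) * entropyD (K + 2 + 2 * j) ^ 2) := by ring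
        _ ≤ c (K + 2 + 2 * j) * (c K * entropyD (K + 3 + 2 * j) ^ 2) :=
            mul_le_mul_of_nonneg_left ih hc1.le
        _ ≤ c (K + 3 + 2 * j) * (c K * entropyD (K + 3 + 2 * j) ^ 2) :=
            mul_le_mul_of_nonneg_right hcm (mul_nonneg hc3.le hsq2)
        _ = c K * (c (K + 3 + 2 * j) * entropyD (K + 3 + 2 * j) ^ 2) := by ring
  have hA : Tendsto (fun j : ℕ => c (K + 1) * (entropyD (K + 2 + 2 * j)) ^ 2) atTop
      (𝓝 (c (K + 1) * 2)) := by
    have := ((tendsto_par (K + 2)).pow 2).const_mul (c (K + 1))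
    rwa [Real.sq_sqrt (by norm_num : (0:ℝ) ≤ 2)] at this
  have hB : Tendsto (fun j : ℕ => c K * (entropyD (K + 3 + 2 * j)) ^ 2) atTop
      (𝓝 (c K * 2)) := by
    have := ((tendsto_par (K + 3)).pow 2).const_mul (c K)
    rwa [Real.sq_sqrt (by norm_num : (0:ℝ) ≤ 2)] at this
  have hle : c (K + 1) * 2 ≤ c K * 2 := le_of_tendsto_of_tendsto' hA hB key
  have := c_mono hK
  linarith

lemma d_one : entropyD 1 = Real.sqrt (2 * π / Real.exp 1) := by
  unfold entropyD
  rw [show (((1:ℕ) : ℝ) + 1) / 2 = 1 from by norm_num, Real.Gamma_one]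
  rw [show ((1:ℕ) : ℝ) / 2 = (1/2 : ℝ) from by norm_num]
  rw [show ((1:ℕ) : ℝ) = (1:ℝ) from by norm_num]
  rw [← Real.sqrt_eq_rpow]
  rw [show (2:ℝ) * Real.sqrt π = Real.sqrt 4 * Real.sqrt π from by
    rw [show (4:ℝ) = 2 ^ 2 from by norm_num, Real.sqrt_sq (by norm_num : (0:ℝ) ≤ 2)]]
  rw [div_one, ← Real.sqrt_mul (by norm_num : (0:ℝ) ≤ 4), ← Real.sqrt_mul (by positivity)]
  congr 1
  have he : Real.exp 1 ≠ 0 := (Real.exp_pos 1).ne'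
  field_simp
  ring

end Stmt18

/-- The sequence `(d_k)` is strictly decreasing, each `d_k > √2`, and
`d_1 = √(2π/e)`. -/
theorem stmt18 :
    (∀ k : ℕ, 1 ≤ k → entropyD (k + 1) < entropyD k) ∧
    (∀ k : ℕ, 1 ≤ k → Real.sqrt 2 < entropyD k) ∧
    entropyD 1 = Real.sqrt (2 * Real.pi / Real.exp 1) := by
  exact ⟨fun _ hk => Stmt18.mono hk, fun _ hk => Stmt18.sqrt2_lt hk, Stmt18.d_one⟩
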